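/- Consider the stochastic process X₀ = 0 and X_t = X_{t−1} + x_t − (1/2 + ε·sgn(X_{t−1})), where x₁, x₂, … are i.i.d. Bernoulli(1/2) and ε ∈ (0, 1/2]. Then for every t ≥ 0 and Δ ≥ 0, P(|X_t| ≥ Δ) ≤ e^{1/2} · e^{−εΔ}. -/

import Mathlib

open MeasureTheory ProbabilityTheory
open scoped ENNReal

namespace ControlledWalkAux

lemma measurable_realSign : Measurable Real.sign := by
  have : Real.sign = fun r : ℝ => if r < 0 then (-1 : ℝ) else if 0 < r then 1 else 0 := by
    funext r; rfl
  rw [this]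
  exact Measurable.ite (measurableSet_lt measurable_id measurable_const)
    measurable_const
    (Measurable.ite (measurableSet_lt measurable_const measurable_id)
      measurable_const measurable_const)

/-- The walk as a function of the coin sequence. -/
noncomputable def G (ε : ℝ) : ℕ → (ℕ → ℝ) → ℝ
  | 0, _ => 0
  | (t+1), v => G ε t v + v (t+1) - 1/2 - ε * Real.sign (G ε t v)

lemma G_measurable (ε : ℝ) : ∀ t, Measurable (G ε t) := by
  intro t
  induction t with
  | zero => exact measurable_const
  | succ t ih =>
    have h1 : Measurable (fun v : ℕ → ℝ => v (t+1)) := measurable_pi_apply _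
    exact (((ih.add h1).sub measurable_const).sub
      (measurable_const.mul (measurable_realSign.comp ih)))

lemma G_depends (ε : ℝ) : ∀ t (v w : ℕ → ℝ), (∀ i, i ≤ t → v i = w i) → G ε t v = G ε t w := by
  intro t
  induction t with
  | zero => intro v w _; rfl
  | succ t ih =>
    intro v w h
    have h1 : G ε t v = G ε t w := ih v w (fun i hi => h i (hi.trans (Nat.le_succ t)))
    simp only [G, h1, h (t+1) le_rfl]

/-- Key pointwise case analysis for one step of the walk. -/
lemma step_cases (ε : ℝ) (hε0 : 0 < ε) (y b Δ : ℝ) (hb : b = 0 ∨ b = 1)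
    (hΔ : ε + 1/2 < Δ) (hE : Δ ≤ |y + b - 1/2 - ε * Real.sign y|) :
    (Δ + ε - 1/2 ≤ y ∧ b = 1) ∨ (y ≤ -(Δ + ε - 1/2) ∧ b = 0) ∨
    (Δ + ε + 1/2 ≤ y ∧ b = 0) ∨ (y ≤ -(Δ + ε + 1/2) ∧ b = 1) := by
  rcases lt_trichotomy y 0 with hy | hy | hy
  · rw [Real.sign_of_neg hy] at hE
    rcases hb with hb | hb <;> subst hb <;> rcases le_abs.mp hE with h | h
    · exact absurd h (by linarith)
    · exact Or.inr (Or.inl ⟨by linarith, rfl⟩)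
    · exact absurd h (by linarith)
    · exact Or.inr (Or.inr (Or.inr ⟨by linarith, rfl⟩))
  · subst hy
    rw [Real.sign_zero] at hE
    rcases hb with hb | hb <;> subst hb <;> rcases le_abs.mp hE with h | h <;>
      exact absurd h (by norm_num; linarith)
  · rw [Real.sign_of_pos hy] at hE
    rcases hb with hb | hb <;> subst hb <;> rcases le_abs.mp hE with h | h
    · exact Or.inr (Or.inr (Or.inl ⟨by linarith, rfl⟩))
    · exact absurd h (by linarith)
    · exact Or.inl ⟨by linarith, rfl⟩
    · exact absurd h (by linarith)

/-- The key real inequality: `exp(ε/2) + exp(-ε/2) ≤ 2 exp(ε²)` for `0 < ε ≤ 1/2`. -/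
lemma cosh_bound (ε : ℝ) (hε0 : 0 < ε) (hε1 : ε ≤ 1/2) :
    Real.exp (ε/2) + Real.exp (-(ε/2)) ≤ 2 * Real.exp (ε^2) := by
  have h2 : (0:ℕ) < 2 := by norm_num
  have hb1 := Real.exp_bound (x := ε/2) (by rw [abs_of_nonneg (by linarith)]; linarith) h2
  have hb2 := Real.exp_bound (x := -(ε/2)) (by rw [abs_of_nonpos (by linarith)]; simp; linarith) h2
  have hs1 : ∑ m ∈ Finset.range 2, (ε/2) ^ m / m.factorial = 1 + ε/2 := by
    simp [Finset.sum_range_succ]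
  have hs2 : ∑ m ∈ Finset.range 2, (-(ε/2)) ^ m / m.factorial = 1 - ε/2 := by
    simp [Finset.sum_range_succ]; ring
  rw [hs1] at hb1
  rw [hs2] at hb2
  have ha1 : |ε/2| = ε/2 := abs_of_nonneg (by linarith)
  have ha2 : |-(ε/2)| = ε/2 := by rw [abs_neg]; exact ha1
  rw [ha1] at hb1
  rw [ha2] at hb2
  have e1 : Real.exp (ε/2) ≤ 1 + ε/2 + (ε/2)^2 * (3 / (2*2)) := by
    have := (abs_le.mp hb1).2
    norm_num [Nat.factorial] at this ⊢
    linarith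
  have e2 : Real.exp (-(ε/2)) ≤ 1 - ε/2 + (ε/2)^2 * (3 / (2*2)) := by
    have := (abs_le.mp hb2).2
    norm_num [Nat.factorial] at this ⊢
    linarith
  have e3 : (1:ℝ) + ε^2 ≤ Real.exp (ε^2) := by
    have := Real.add_one_le_exp (ε^2); linarith
  nlinarith [sq_nonneg ε]

end ControlledWalkAux

open ControlledWalkAux in
/-- Exponential tail bound for the controlled random walk with fixed bias ε. -/
theorem controlled_walk_tail (ε : ℝ) (hε0 : 0 < ε) (hε1 : ε ≤ 1/2)
    {Ω : Type*} [MeasurableSpace Ω] (μ : Measure Ω) [IsProbabilityMeasure μ]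
    (x : ℕ → Ω → ℝ) (hmeas : ∀ n, Measurable (x n))
    (hindep : iIndepFun x μ)
    (hBern : ∀ n, μ {ω | x n ω = 1} = 1/2 ∧ μ {ω | x n ω = 0} = 1/2)
    (X : ℕ → Ω → ℝ) (hX0 : ∀ ω, X 0 ω = 0)
    (hXrec : ∀ t ω, X (t + 1) ω = X t ω + x (t + 1) ω - 1/2 - ε * Real.sign (X t ω)) :
    ∀ (t : ℕ) (Δ : ℝ), 0 ≤ Δ →
      μ {ω | Δ ≤ |X t ω|} ≤ ENNReal.ofReal (Real.exp (1/2) * Real.exp (-(ε * Δ))) := by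
  classical
  -- X t as a measurable function of the coins
  have hXG : ∀ t ω, X t ω = G ε t (fun n => x n ω) := by
    intro t
    induction t with
    | zero => intro ω; rw [hX0]; rfl
    | succ t ih => intro ω; rw [hXrec, ih ω]; rfl
  have hXmeas : ∀ t, Measurable (X t) := by
    intro t
    have hrw : X t = fun ω => G ε t (fun n => x n ω) := funext (hXG t)
    rw [hrw]
    exact (G_measurable ε t).comp (measurable_pi_lambda _ fun n => hmeas n)
  -- independence of X t and the next coin
  have hIndep : ∀ t, IndepFun (X t) (x (t+1)) μ := by
    intro t
    have hST : Disjoint (Finset.range (t+1)) ({t+1} : Finset ℕ) := by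
      simp only [Finset.disjoint_left, Finset.mem_range, Finset.mem_singleton]
      omega
    have h := hindep.indepFun_finset (Finset.range (t+1)) {t+1} hST hmeas
    set F : ((Finset.range (t+1) : Finset ℕ) → ℝ) → ℝ :=
      fun u => G ε t (fun n => if hn : n ∈ Finset.range (t+1) then u ⟨n, hn⟩ else 0) with hFdef
    have hFmeas : Measurable F := by
      apply (G_measurable ε t).comp
      apply measurable_pi_lambda
      intro n
      by_cases hn : n ∈ Finset.range (t+1)
      · simpa [hn] using measurable_pi_apply (⟨n, hn⟩ : (Finset.range (t+1) : Finset ℕ))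
      · simp [hn]
    set Fe : ((({t+1} : Finset ℕ)) → ℝ) → ℝ := fun u => u ⟨t+1, Finset.mem_singleton_self _⟩ with hFedef
    have hFemeas : Measurable Fe := measurable_pi_apply _
    have hcomp := h.comp hFmeas hFemeas
    have hXeq : (F ∘ fun a (i : (Finset.range (t+1) : Finset ℕ)) => x i a) = X t := by
      funext ω
      rw [hXG t ω]
      apply G_depends
      intro i hi
      have hmem : i ∈ Finset.range (t+1) := Finset.mem_range.mpr (Nat.lt_succ_of_le hi)
      simp [hmem]
    have hxeq : (Fe ∘ fun a (i : (({t+1} : Finset ℕ))) => x i a) = x (t+1) := by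
      funext ω; rfl
    rw [hXeq, hxeq] at hcomp
    exact hcomp
  -- the coins are a.s. in {0,1}
  have hmeas1 : ∀ n, MeasurableSet {ω | x n ω = 1} :=
    fun n => (hmeas n) (measurableSet_singleton 1)
  have hmeas0 : ∀ n, MeasurableSet {ω | x n ω = 0} :=
    fun n => (hmeas n) (measurableSet_singleton 0)
  have hnull : ∀ n, μ {ω | ¬(x n ω = 0 ∨ x n ω = 1)} = 0 := by
    intro n
    have hd : Disjoint {ω | x n ω = 0} {ω | x n ω = 1} := by
      rw [Set.disjoint_left]
      intro ω h0 h1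
      simp only [Set.mem_setOf_eq] at h0 h1
      rw [h0] at h1
      exact zero_ne_one h1
    have hu : μ ({ω | x n ω = 0} ∪ {ω | x n ω = 1}) = 1 := by
      rw [measure_union hd (hmeas1 n), (hBern n).1, (hBern n).2]
      simp only [one_div]
      exact ENNReal.inv_two_add_inv_two
    have hcompl : {ω | ¬(x n ω = 0 ∨ x n ω = 1)} = ({ω | x n ω = 0} ∪ {ω | x n ω = 1})ᶜ := by
      ext ω; simp
    rw [hcompl]
    exact (prob_compl_eq_zero_iff ((hmeas0 n).union (hmeas1 n))).mpr hu
  -- trivial bound when ε*Δ ≤ 1/2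
  have htriv : ∀ (s : Set Ω) (Δ : ℝ), ε * Δ ≤ 1/2 →
      μ s ≤ ENNReal.ofReal (Real.exp (1/2) * Real.exp (-(ε * Δ))) := by
    intro s Δ h
    calc μ s ≤ 1 := prob_le_one
    _ = ENNReal.ofReal 1 := by simp
    _ ≤ _ := by
        apply ENNReal.ofReal_le_ofReal
        rw [← Real.exp_add]
        exact Real.one_le_exp (by linarith)
  intro t
  induction t with
  | zero =>
    intro Δ hΔ
    by_cases hc : ε * Δ ≤ 1/2
    · exact htriv _ _ hc
    · have hΔpos : 0 < Δ := by nlinarith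
      have hempty : {ω | Δ ≤ |X 0 ω|} = ∅ := by
        ext ω
        simp [hX0 ω, not_le, hΔpos]
      rw [hempty]
      simp
  | succ t ih =>
    intro Δ hΔ
    by_cases hc : Δ ≤ ε + 1/2
    · exact htriv _ _ (by nlinarith)
    · push_neg at hc
      have hc₁pos : (0:ℝ) < Δ + ε - 1/2 := by linarith
      have hc₂pos : (0:ℝ) < Δ + ε + 1/2 := by linarith
      set c₁ : ℝ := Δ + ε - 1/2 with hc₁def
      set c₂ : ℝ := Δ + ε + 1/2 with hc₂def
      -- the four sets
      have hsub : {ω | Δ ≤ |X (t+1) ω|} ∩ {ω | x (t+1) ω = 0 ∨ x (t+1) ω = 1}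
          ⊆ ((X t ⁻¹' Set.Ici c₁ ∩ x (t+1) ⁻¹' {1}) ∪ (X t ⁻¹' Set.Iic (-c₁) ∩ x (t+1) ⁻¹' {0})) ∪
            ((X t ⁻¹' Set.Ici c₂ ∩ x (t+1) ⁻¹' {0}) ∪ (X t ⁻¹' Set.Iic (-c₂) ∩ x (t+1) ⁻¹' {1})) := by
        rintro ω ⟨hE, hb⟩
        have hE' : Δ ≤ |X t ω + x (t+1) ω - 1/2 - ε * Real.sign (X t ω)| := by
          rw [← hXrec]; exact hE
        rcases step_cases ε hε0 (X t ω) (x (t+1) ω) Δ hb hc hE' with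
          ⟨h, hb'⟩ | ⟨h, hb'⟩ | ⟨h, hb'⟩ | ⟨h, hb'⟩
        · exact Or.inl (Or.inl ⟨h, hb'⟩)
        · exact Or.inl (Or.inr ⟨h, hb'⟩)
        · exact Or.inr (Or.inl ⟨h, hb'⟩)
        · exact Or.inr (Or.inr ⟨h, hb'⟩)
      -- measure arithmetic
      have hhalf : μ (x (t+1) ⁻¹' {1}) = 1/2 := (hBern (t+1)).1
      have hhalf0 : μ (x (t+1) ⁻¹' {0}) = 1/2 := (hBern (t+1)).2
      have hm1 : μ (X t ⁻¹' Set.Ici c₁ ∩ x (t+1) ⁻¹' {1})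
          = μ (X t ⁻¹' Set.Ici c₁) * (1/2) := by
        rw [(hIndep t).measure_inter_preimage_eq_mul _ _ measurableSet_Ici (measurableSet_singleton 1), hhalf]
      have hm2 : μ (X t ⁻¹' Set.Iic (-c₁) ∩ x (t+1) ⁻¹' {0})
          = μ (X t ⁻¹' Set.Iic (-c₁)) * (1/2) := by
        rw [(hIndep t).measure_inter_preimage_eq_mul _ _ measurableSet_Iic (measurableSet_singleton 0), hhalf0]
      have hm3 : μ (X t ⁻¹' Set.Ici c₂ ∩ x (t+1) ⁻¹' {0})
          = μ (X t ⁻¹' Set.Ici c₂) * (1/2) := by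
        rw [(hIndep t).measure_inter_preimage_eq_mul _ _ measurableSet_Ici (measurableSet_singleton 0), hhalf0]
      have hm4 : μ (X t ⁻¹' Set.Iic (-c₂) ∩ x (t+1) ⁻¹' {1})
          = μ (X t ⁻¹' Set.Iic (-c₂)) * (1/2) := by
        rw [(hIndep t).measure_inter_preimage_eq_mul _ _ measurableSet_Iic (measurableSet_singleton 1), hhalf]
      -- union of the positive and negative tails
      have hunion : ∀ c : ℝ, 0 < c →
          μ (X t ⁻¹' Set.Ici c) + μ (X t ⁻¹' Set.Iic (-c)) = μ {ω | c ≤ |X t ω|} := by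
        intro c hcpos
        have hdisj : Disjoint (X t ⁻¹' Set.Ici c) (X t ⁻¹' Set.Iic (-c)) := by
          rw [Set.disjoint_left]
          intro ω h1 h2
          simp only [Set.mem_preimage, Set.mem_Ici, Set.mem_Iic] at h1 h2
          linarith
        rw [← measure_union hdisj ((hXmeas t) measurableSet_Iic)]
        congr 1
        ext ω
        simp only [Set.mem_union, Set.mem_preimage, Set.mem_Ici, Set.mem_Iic, Set.mem_setOf_eq,
          le_abs]
        constructor
        · rintro (h | h)
          · exact Or.inl h
          · exact Or.inr (by linarith)
        · rintro (h | h)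
          · exact Or.inl h
          · exact Or.inr (by linarith)
      -- apply the induction hypothesis
      have hih1 := ih c₁ hc₁pos.le
      have hih2 := ih c₂ hc₂pos.le
      -- put it together
      have hmain : μ {ω | Δ ≤ |X (t+1) ω|}
          ≤ μ {ω | c₁ ≤ |X t ω|} * (1/2) + μ {ω | c₂ ≤ |X t ω|} * (1/2) := by
        calc μ {ω | Δ ≤ |X (t+1) ω|}
            ≤ μ (({ω | Δ ≤ |X (t+1) ω|} ∩ {ω | x (t+1) ω = 0 ∨ x (t+1) ω = 1})
                ∪ {ω | ¬(x (t+1) ω = 0 ∨ x (t+1) ω = 1)}) := by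
              apply measure_mono
              intro ω hω
              by_cases hgood : x (t+1) ω = 0 ∨ x (t+1) ω = 1
              · exact Or.inl ⟨hω, hgood⟩
              · exact Or.inr hgood
          _ ≤ μ ({ω | Δ ≤ |X (t+1) ω|} ∩ {ω | x (t+1) ω = 0 ∨ x (t+1) ω = 1})
                + μ {ω | ¬(x (t+1) ω = 0 ∨ x (t+1) ω = 1)} := measure_union_le _ _
          _ = μ ({ω | Δ ≤ |X (t+1) ω|} ∩ {ω | x (t+1) ω = 0 ∨ x (t+1) ω = 1}) := by
              rw [hnull (t+1), add_zero]
          _ ≤ μ (((X t ⁻¹' Set.Ici c₁ ∩ x (t+1) ⁻¹' {1}) ∪ (X t ⁻¹' Set.Iic (-c₁) ∩ x (t+1) ⁻¹' {0})) ∪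
              ((X t ⁻¹' Set.Ici c₂ ∩ x (t+1) ⁻¹' {0}) ∪ (X t ⁻¹' Set.Iic (-c₂) ∩ x (t+1) ⁻¹' {1}))) :=
              measure_mono hsub
          _ ≤ (μ (X t ⁻¹' Set.Ici c₁ ∩ x (t+1) ⁻¹' {1}) + μ (X t ⁻¹' Set.Iic (-c₁) ∩ x (t+1) ⁻¹' {0}))
              + (μ (X t ⁻¹' Set.Ici c₂ ∩ x (t+1) ⁻¹' {0}) + μ (X t ⁻¹' Set.Iic (-c₂) ∩ x (t+1) ⁻¹' {1})) :=
              le_trans (measure_union_le _ _) (add_le_add (measure_union_le _ _) (measure_union_le _ _))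
          _ = (μ (X t ⁻¹' Set.Ici c₁) + μ (X t ⁻¹' Set.Iic (-c₁))) * (1/2)
              + (μ (X t ⁻¹' Set.Ici c₂) + μ (X t ⁻¹' Set.Iic (-c₂))) * (1/2) := by
              rw [hm1, hm2, hm3, hm4]; ring
          _ = μ {ω | c₁ ≤ |X t ω|} * (1/2) + μ {ω | c₂ ≤ |X t ω|} * (1/2) := by
              rw [hunion c₁ hc₁pos, hunion c₂ hc₂pos]
      refine hmain.trans ?_
      have hofhalf : (1/2 : ℝ≥0∞) = ENNReal.ofReal (1/2) := by
        rw [ENNReal.ofReal_div_of_pos (by norm_num)]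
        norm_num
      calc μ {ω | c₁ ≤ |X t ω|} * (1/2) + μ {ω | c₂ ≤ |X t ω|} * (1/2)
          ≤ ENNReal.ofReal (Real.exp (1/2) * Real.exp (-(ε * c₁))) * (1/2)
            + ENNReal.ofReal (Real.exp (1/2) * Real.exp (-(ε * c₂))) * (1/2) := by
            gcongr
        _ = ENNReal.ofReal (Real.exp (1/2) * Real.exp (-(ε * c₁)) * (1/2)
              + Real.exp (1/2) * Real.exp (-(ε * c₂)) * (1/2)) := by
            rw [hofhalf, ← ENNReal.ofReal_mul (by positivity), ← ENNReal.ofReal_mul (by positivity),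
              ← ENNReal.ofReal_add (by positivity) (by positivity)]
        _ ≤ ENNReal.ofReal (Real.exp (1/2) * Real.exp (-(ε * Δ))) := by
            apply ENNReal.ofReal_le_ofReal
            have h1 : Real.exp (-(ε * c₁)) = Real.exp (-(ε * Δ) - ε^2) * Real.exp (ε/2) := by
              rw [← Real.exp_add]; congr 1; rw [hc₁def]; ring
            have h2 : Real.exp (-(ε * c₂)) = Real.exp (-(ε * Δ) - ε^2) * Real.exp (-(ε/2)) := by
              rw [← Real.exp_add]; congr 1; rw [hc₂def]; ring
            have hA : Real.exp (-(ε * Δ) - ε^2) * Real.exp (ε^2) = Real.exp (-(ε * Δ)) := by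
              rw [← Real.exp_add]; congr 1; ring
            have key := cosh_bound ε hε0 hε1
            calc Real.exp (1/2) * Real.exp (-(ε * c₁)) * (1/2)
                  + Real.exp (1/2) * Real.exp (-(ε * c₂)) * (1/2)
                = Real.exp (1/2) * Real.exp (-(ε * Δ) - ε^2)
                    * ((Real.exp (ε/2) + Real.exp (-(ε/2))) / 2) := by
                  rw [h1, h2]; ring
              _ ≤ Real.exp (1/2) * Real.exp (-(ε * Δ) - ε^2) * ((2 * Real.exp (ε^2)) / 2) := by
                  gcongr
              _ = Real.exp (1/2) * (Real.exp (-(ε * Δ) - ε^2) * Real.exp (ε^2)) := by ring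
              _ = Real.exp (1/2) * Real.exp (-(ε * Δ)) := by rw [hA]
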